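/- Let G be a totally disconnected locally compact group and α a contracting automorphism of G. Let n_G = [Ω : α(Ω)] be the index for some compact open subgroup Ω with α(Ω) ⊆ Ω (this index is a positive integer independent of Ω, equal to the module of α⁻¹ on Haar measure). If H is a closed α-invariant subgroup (α(H) = H) with n_H = n_G, then H = G. Consequently, every strictly ascending chain of closed α-invariant subgroups of G has length at most log₂(n_G). -/

import Mathlib

open Filter Topology Pointwise

private theorem auxT1 (G : Type*) [TopologicalSpace G] [TotallyDisconnectedSpace G] :
    T1Space G := by
  constructor
  intro x
  have h := totallyDisconnectedSpace_iff_connectedComponent_singleton.mp ‹_› x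
  rw [← h]
  exact isClosed_connectedComponent

private theorem aux_mem_of_iterate {G : Type*} [Group G] (α : G ≃* G) {H : Subgroup G}
    (hH : H.map α.toMonoidHom = H) (n : ℕ) {x : G} (hx : (⇑α)^[n] x ∈ H) : x ∈ H := by
  induction n generalizing x with
  | zero => simpa using hx
  | succ n ih =>
    rw [Function.iterate_succ_apply] at hx
    have hax : α x ∈ H := ih hx
    rw [← hH] at hax
    obtain ⟨y, hy, hyx⟩ := hax
    have : y = x := α.injective hyx
    rwa [← this]

private theorem aux_iterate_mem {G : Type*} [Group G] (α : G ≃* G) {H : Subgroup G}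
    (hH : H.map α.toMonoidHom = H) (n : ℕ) {x : G} (hx : x ∈ H) : (⇑α)^[n] x ∈ H := by
  induction n generalizing x with
  | zero => simpa using hx
  | succ n ih =>
    rw [Function.iterate_succ_apply]
    have : α x ∈ H := by rw [← hH]; exact ⟨x, hx, rfl⟩
    exact ih this

private theorem aux_map_inf {G : Type*} [Group G] (α : G ≃* G) (Ω : Subgroup G) {K : Subgroup G}
    (hK : K.map α.toMonoidHom = K) :
    (Ω ⊓ K).map α.toMonoidHom = Ω.map α.toMonoidHom ⊓ K := by
  rw [Subgroup.map_inf _ _ _ α.injective, hK]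

private theorem aux_emb {G : Type*} [Group G] (α : G ≃* G) (Ω : Subgroup G)
    {H K : Subgroup G} (hHst : H.map α.toMonoidHom = H) (hKst : K.map α.toMonoidHom = K)
    (hHK : H ≤ K) :
    ∃ χ : (↥(Ω ⊓ H) ⧸ ((Ω ⊓ H).map α.toMonoidHom).subgroupOf (Ω ⊓ H)) →
        (↥(Ω ⊓ K) ⧸ ((Ω ⊓ K).map α.toMonoidHom).subgroupOf (Ω ⊓ K)),
      Function.Injective χ ∧
      Set.range χ = Set.range (fun a : ↥(Ω ⊓ H) =>
        (QuotientGroup.mk (Subgroup.inclusion (inf_le_inf_left Ω hHK) a) :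
          ↥(Ω ⊓ K) ⧸ ((Ω ⊓ K).map α.toMonoidHom).subgroupOf (Ω ⊓ K))) := by
  have hker : ∀ a b : ↥(Ω ⊓ H),
      ((QuotientGroup.mk (Subgroup.inclusion (inf_le_inf_left Ω hHK) a) :
          ↥(Ω ⊓ K) ⧸ ((Ω ⊓ K).map α.toMonoidHom).subgroupOf (Ω ⊓ K)) =
        QuotientGroup.mk (Subgroup.inclusion (inf_le_inf_left Ω hHK) b)) ↔
      a⁻¹ * b ∈ ((Ω ⊓ H).map α.toMonoidHom).subgroupOf (Ω ⊓ H) := by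
    intro a b
    rw [QuotientGroup.eq, Subgroup.mem_subgroupOf, Subgroup.mem_subgroupOf]
    have hco : (((Subgroup.inclusion (inf_le_inf_left Ω hHK) a)⁻¹ *
        Subgroup.inclusion (inf_le_inf_left Ω hHK) b : ↥(Ω ⊓ K)) : G) = ((a⁻¹ * b : ↥(Ω ⊓ H)) : G) := by
      push_cast [Subgroup.coe_inclusion]
      rfl
    rw [hco]
    have hzH : ((a⁻¹ * b : ↥(Ω ⊓ H)) : G) ∈ H := ((a⁻¹ * b : ↥(Ω ⊓ H)).2 : _ ∈ Ω ⊓ H).2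
    have hzK : ((a⁻¹ * b : ↥(Ω ⊓ H)) : G) ∈ K := hHK hzH
    rw [aux_map_inf α Ω hKst, aux_map_inf α Ω hHst, Subgroup.mem_inf, Subgroup.mem_inf]
    exact ⟨fun h => ⟨h.1, hzH⟩, fun h => ⟨h.1, hzK⟩⟩
  refine ⟨fun q => Quotient.liftOn' q
      (fun a => QuotientGroup.mk (Subgroup.inclusion (inf_le_inf_left Ω hHK) a))
      (fun a b hab => (hker a b).mpr (QuotientGroup.leftRel_apply.mp hab)), ?_, ?_⟩
  · intro q1 q2
    refine Quotient.inductionOn₂' q1 q2 fun a b h => ?_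
    exact Quotient.sound' (QuotientGroup.leftRel_apply.mpr ((hker a b).mp h))
  · have hsurj : Function.Surjective
        (QuotientGroup.mk (s := ((Ω ⊓ H).map α.toMonoidHom).subgroupOf (Ω ⊓ H))) :=
      QuotientGroup.mk_surjective
    rw [← hsurj.range_comp]
    rfl

private theorem aux_fin {G : Type*} [Group G] [TopologicalSpace G] [IsTopologicalGroup G]
    (α : G ≃* G) (hc : Continuous α) (hc' : Continuous α.symm)
    (Ω : Subgroup G) (hΩc : IsCompact (Ω : Set G)) (hΩo : IsOpen (Ω : Set G))
    {K : Subgroup G} (hKcl : IsClosed (K : Set G)) (hKst : K.map α.toMonoidHom = K) :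
    Finite (↥(Ω ⊓ K) ⧸ ((Ω ⊓ K).map α.toMonoidHom).subgroupOf (Ω ⊓ K)) := by
  have hBc : IsCompact ((Ω ⊓ K : Subgroup G) : Set G) := by
    rw [Subgroup.coe_inf]
    exact hΩc.inter_right hKcl
  have : CompactSpace ↥(Ω ⊓ K) := isCompact_iff_compactSpace.mp hBc
  apply Subgroup.quotient_finite_of_isOpen
  have hopen : IsOpen ((Ω.map α.toMonoidHom : Subgroup G) : Set G) := by
    have h1 : ((Ω.map α.toMonoidHom : Subgroup G) : Set G) = ⇑α '' (Ω : Set G) := by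
      rw [Subgroup.coe_map]; rfl
    rw [h1]
    exact (Homeomorph.mk α.toEquiv hc hc').isOpenMap _ hΩo
  have heq : ((((Ω ⊓ K).map α.toMonoidHom).subgroupOf (Ω ⊓ K) : Subgroup ↥(Ω ⊓ K)) : Set ↥(Ω ⊓ K))
      = (Subtype.val) ⁻¹' ((Ω.map α.toMonoidHom : Subgroup G) : Set G) := by
    ext x
    simp only [SetLike.mem_coe, Subgroup.mem_subgroupOf, Set.mem_preimage]
    rw [aux_map_inf α Ω hKst, Subgroup.mem_inf]
    have hxK : (x : G) ∈ K := x.2.2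
    exact ⟨fun h => h.1, fun h => ⟨h, hxK⟩⟩
  rw [heq]
  exact hopen.preimage continuous_subtype_val

private theorem aux_pos {G : Type*} [Group G] [TopologicalSpace G] [IsTopologicalGroup G]
    (α : G ≃* G) (hc : Continuous α) (hc' : Continuous α.symm)
    (Ω : Subgroup G) (hΩc : IsCompact (Ω : Set G)) (hΩo : IsOpen (Ω : Set G))
    {K : Subgroup G} (hKcl : IsClosed (K : Set G)) (hKst : K.map α.toMonoidHom = K) :
    0 < ((Ω ⊓ K).map α.toMonoidHom).relIndex (Ω ⊓ K) := by
  have hfin := aux_fin α hc hc' Ω hΩc hΩo hKcl hKst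
  have : ((Ω ⊓ K).map α.toMonoidHom).relIndex (Ω ⊓ K)
      = Nat.card (↥(Ω ⊓ K) ⧸ ((Ω ⊓ K).map α.toMonoidHom).subgroupOf (Ω ⊓ K)) := rfl
  rw [this]
  exact Nat.card_pos

private theorem aux_mono {G : Type*} [Group G] [TopologicalSpace G] [IsTopologicalGroup G]
    (α : G ≃* G) (hc : Continuous α) (hc' : Continuous α.symm)
    (Ω : Subgroup G) (hΩc : IsCompact (Ω : Set G)) (hΩo : IsOpen (Ω : Set G))
    {H K : Subgroup G} (hKcl : IsClosed (K : Set G))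
    (hHst : H.map α.toMonoidHom = H) (hKst : K.map α.toMonoidHom = K) (hHK : H ≤ K) :
    ((Ω ⊓ H).map α.toMonoidHom).relIndex (Ω ⊓ H)
      ≤ ((Ω ⊓ K).map α.toMonoidHom).relIndex (Ω ⊓ K) := by
  obtain ⟨χ, hinj, -⟩ := aux_emb α Ω hHst hKst hHK
  have hfin := aux_fin α hc hc' Ω hΩc hΩo hKcl hKst
  exact Nat.card_le_card_of_injective χ hinj

private theorem aux_main {G : Type*} [Group G] [TopologicalSpace G] [IsTopologicalGroup G]
    [TotallyDisconnectedSpace G]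
    (α : G ≃* G) (hc : Continuous α) (hc' : Continuous α.symm)
    (hcontr : ∀ K : Set G, IsCompact K → ∀ U ∈ 𝓝 (1 : G),
      ∀ᶠ n : ℕ in atTop, ∀ x ∈ K, (⇑α)^[n] x ∈ U)
    (Ω : Subgroup G) (hΩc : IsCompact (Ω : Set G)) (hΩo : IsOpen (Ω : Set G))
    (hinv : Ω.map α.toMonoidHom ≤ Ω)
    (hcover : ∀ x : G, ∃ n : ℕ, (⇑α)^[n] x ∈ Ω)
    {H K : Subgroup G} (hHcl : IsClosed (H : Set G)) (hKcl : IsClosed (K : Set G))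
    (hHst : H.map α.toMonoidHom = H) (hKst : K.map α.toMonoidHom = K) (hHK : H ≤ K)
    (hlt : ((Ω ⊓ K).map α.toMonoidHom).relIndex (Ω ⊓ K) <
      2 * ((Ω ⊓ H).map α.toMonoidHom).relIndex (Ω ⊓ H)) :
    K ≤ H := by
  haveI : T1Space G := auxT1 G
  set A : Subgroup G := Ω ⊓ H with hA
  set B : Subgroup G := Ω ⊓ K with hB
  -- Step 1: pigeonhole
  have hm2 : ∀ g ∈ (B : Set G), g ∈ (A : Set G) * (⇑α '' (B : Set G)) * (A : Set G) := by
    intro g hg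
    obtain ⟨χ, hχinj, hχrange⟩ := aux_emb α Ω hHst hKst hHK
    haveI hfin := aux_fin α hc hc' Ω hΩc hΩo hKcl hKst
    set χ₀ : ↥A → (↥B ⧸ (B.map α.toMonoidHom).subgroupOf B) :=
      fun a => QuotientGroup.mk (Subgroup.inclusion (inf_le_inf_left Ω hHK) a) with hχ₀
    set s : Set (↥B ⧸ (B.map α.toMonoidHom).subgroupOf B) := Set.range χ₀ with hs
    have hscard : s.ncard = (A.map α.toMonoidHom).relIndex A := by
      have h1 : s = Set.range χ := by rw [hχrange]
      rw [h1, ← Set.image_univ, Set.ncard_image_of_injective _ hχinj, Set.ncard_univ]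
      rfl
    set gB : ↥B := ⟨g, hg⟩ with hgB
    set t : Set (↥B ⧸ (B.map α.toMonoidHom).subgroupOf B) := (fun q => gB • q) '' s with ht
    have htcard : t.ncard = s.ncard := Set.ncard_image_of_injective _ (MulAction.injective gB)
    have hQK : Nat.card (↥B ⧸ (B.map α.toMonoidHom).subgroupOf B)
        = (B.map α.toMonoidHom).relIndex B := rfl
    have hnd : ¬ Disjoint s t := by
      intro hd
      have hu := Set.ncard_union_eq hd (Set.toFinite s) (Set.toFinite t)
      have hle : (s ∪ t).ncard ≤ Nat.card (↥B ⧸ (B.map α.toMonoidHom).subgroupOf B) := by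
        rw [← Set.ncard_univ]
        exact Set.ncard_le_ncard (Set.subset_univ _) Set.finite_univ
      omega
    obtain ⟨q, hqs, hqt⟩ := Set.not_disjoint_iff.mp hnd
    obtain ⟨a₁, ha₁⟩ := hqs
    obtain ⟨q', ⟨a₂, ha₂⟩, hq'⟩ := hqt
    have heq : χ₀ a₁ = QuotientGroup.mk (gB * Subgroup.inclusion (inf_le_inf_left Ω hHK) a₂) := by
      rw [ha₁, ← hq', ← ha₂]
      rfl
    have hmem : ((Subgroup.inclusion (inf_le_inf_left Ω hHK) a₁)⁻¹ *
        (gB * Subgroup.inclusion (inf_le_inf_left Ω hHK) a₂) : ↥B) ∈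
        (B.map α.toMonoidHom).subgroupOf B := QuotientGroup.eq.mp heq
    rw [Subgroup.mem_subgroupOf] at hmem
    set w : G := (((Subgroup.inclusion (inf_le_inf_left Ω hHK) a₁)⁻¹ *
        (gB * Subgroup.inclusion (inf_le_inf_left Ω hHK) a₂) : ↥B) : G) with hw
    have hwset : w ∈ ⇑α '' (B : Set G) := by
      obtain ⟨y, hy, hyw⟩ := hmem
      exact ⟨y, hy, hyw⟩
    have hwval : w = (a₁ : G)⁻¹ * (g * (a₂ : G)) := by
      rw [hw]
      push_cast [Subgroup.coe_inclusion]
      rfl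
    have hgeq : (a₁ : G) * w * (a₂ : G)⁻¹ = g := by rw [hwval]; group
    rw [← hgeq]
    exact Set.mul_mem_mul (Set.mul_mem_mul a₁.2 hwset) (A.inv_mem a₂.2)
  -- Step 2: iteration
  have hmapA : A.map α.toMonoidHom ≤ A := by
    rw [hA, aux_map_inf α Ω hHst]; exact inf_le_inf hinv le_rfl
  have hmapB : B.map α.toMonoidHom ≤ B := by
    rw [hB, aux_map_inf α Ω hKst]; exact inf_le_inf hinv le_rfl
  have hasub : ⇑α '' (A : Set G) ⊆ (A : Set G) := by
    rintro y ⟨x, hx, rfl⟩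
    exact hmapA (Subgroup.mem_map_of_mem _ hx)
  have hbsub : ⇑α '' (B : Set G) ⊆ (B : Set G) := by
    rintro y ⟨x, hx, rfl⟩
    exact hmapB (Subgroup.mem_map_of_mem _ hx)
  have hwdec : ∀ m, (⇑α)^[m+1] '' (B : Set G) ⊆ (⇑α)^[m] '' (B : Set G) := by
    intro m
    rw [Function.iterate_succ, Set.image_comp]
    exact Set.image_mono hbsub
  have haa : (A : Set G) * (A : Set G) = (A : Set G) := coe_mul_coe A
  have hkey : ∀ m, (B : Set G) ⊆ (A : Set G) * ((⇑α)^[m+1] '' (B : Set G)) * (A : Set G) := by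
    intro m
    induction m with
    | zero =>
      intro g hg
      rw [Function.iterate_one]
      exact hm2 g hg
    | succ m ih =>
      have him : ⇑α '' ((⇑α)^[m+1] '' (B : Set G)) = (⇑α)^[m+2] '' (B : Set G) := by
        rw [← Set.image_comp, ← Function.iterate_succ']
      have h1 : ⇑α '' (B : Set G) ⊆ (A : Set G) * ((⇑α)^[m+2] '' (B : Set G)) * (A : Set G) := by
        calc ⇑α '' (B : Set G)
            ⊆ ⇑α '' ((A : Set G) * ((⇑α)^[m+1] '' (B : Set G)) * (A : Set G)) :=
              Set.image_mono ih
          _ = (⇑α '' (A : Set G)) * (⇑α '' ((⇑α)^[m+1] '' (B : Set G))) * (⇑α '' (A : Set G)) := by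
              rw [Set.image_mul, Set.image_mul]
          _ ⊆ (A : Set G) * ((⇑α)^[m+2] '' (B : Set G)) * (A : Set G) := by
              rw [him]
              exact Set.mul_subset_mul (Set.mul_subset_mul hasub (subset_refl _)) hasub
      calc (B : Set G)
          ⊆ (A : Set G) * (⇑α '' (B : Set G)) * (A : Set G) := fun g hg => hm2 g hg
        _ ⊆ (A : Set G) * ((A : Set G) * ((⇑α)^[m+2] '' (B : Set G)) * (A : Set G)) * (A : Set G) :=
            Set.mul_subset_mul (Set.mul_subset_mul (subset_refl _) h1) (subset_refl _)
        _ = (A : Set G) * ((⇑α)^[m+2] '' (B : Set G)) * (A : Set G) := by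
            rw [show ((A : Set G) * ((A : Set G) * ((⇑α)^[m+2] '' (B : Set G)) * (A : Set G)) *
                (A : Set G) : Set G)
                = ((A : Set G) * (A : Set G)) * ((⇑α)^[m+2] '' (B : Set G)) *
                  ((A : Set G) * (A : Set G)) by simp only [mul_assoc], haa]
  -- Step 3: closure argument
  have hacl : IsClosed (A : Set G) := by
    rw [hA, Subgroup.coe_inf]
    exact (Subgroup.isClosed_of_isOpen Ω hΩo).inter hHcl
  have hacpt : IsCompact (A : Set G) := by
    rw [hA, Subgroup.coe_inf]
    exact hΩc.inter_right hHcl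
  have hbcl : IsClosed (B : Set G) := by
    rw [hB, Subgroup.coe_inf]
    exact (Subgroup.isClosed_of_isOpen Ω hΩo).inter hKcl
  have hbcpt : IsCompact (B : Set G) := by
    rw [hB, Subgroup.coe_inf]
    exact hΩc.inter_right hKcl
  have hwcl : ∀ m, IsClosed ((⇑α)^[m] '' (B : Set G)) := by
    intro m
    induction m with
    | zero => simpa using hbcl
    | succ m ih =>
      rw [Function.iterate_succ', Set.image_comp]
      exact (Homeomorph.mk α.toEquiv hc hc').isClosedMap _ ih
  have hBsubH : (B : Set G) ⊆ (H : Set G) := by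
    intro x hx
    set F : ℕ → Set (G × G × G) := fun m =>
      {p | p.1 ∈ (A : Set G) ∧ p.2.1 ∈ (⇑α)^[m+1] '' (B : Set G) ∧ p.2.2 ∈ (A : Set G) ∧
        p.1 * p.2.1 * p.2.2 = x} with hF
    have hFne : ∀ m, (F m).Nonempty := by
      intro m
      obtain ⟨v, hv, u, hu, hvu⟩ := Set.mem_mul.mp (hkey m hx)
      obtain ⟨p, hp, q, hq, hpq⟩ := Set.mem_mul.mp hv
      exact ⟨⟨p, q, u⟩, hp, hq, hu, by rw [← hvu, ← hpq]⟩
    have hFdec : ∀ m, F (m+1) ⊆ F m := by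
      intro m p hp
      exact ⟨hp.1, hwdec (m+1) hp.2.1, hp.2.2⟩
    have hFcl : ∀ m, IsClosed (F m) := by
      intro m
      have hrw : F m = (Prod.fst ⁻¹' (A : Set G)) ∩
          ((fun p : G × G × G => p.2.1) ⁻¹' ((⇑α)^[m+1] '' (B : Set G))) ∩
          ((fun p : G × G × G => p.2.2) ⁻¹' (A : Set G)) ∩
          ((fun p : G × G × G => p.1 * p.2.1 * p.2.2) ⁻¹' {x}) := by
        ext p
        simp only [hF, Set.mem_inter_iff, Set.mem_preimage, Set.mem_singleton_iff,
          Set.mem_setOf_eq]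
        tauto
      rw [hrw]
      refine (((hacl.preimage continuous_fst).inter
        ((hwcl (m+1)).preimage (continuous_fst.comp continuous_snd))).inter
        (hacl.preimage (continuous_snd.comp continuous_snd))).inter
        (isClosed_singleton.preimage ?_)
      exact (continuous_fst.mul (continuous_fst.comp continuous_snd)).mul
        (continuous_snd.comp continuous_snd)
    have hF0cpt : IsCompact (F 0) := by
      have hw1cpt : IsCompact ((⇑α)^[1] '' (B : Set G)) := by
        rw [Function.iterate_one]; exact hbcpt.image hc
      have hsub : F 0 ⊆ (A : Set G) ×ˢ (((⇑α)^[1] '' (B : Set G)) ×ˢ (A : Set G)) := by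
        intro p hp
        exact ⟨hp.1, hp.2.1, hp.2.2.1⟩
      exact IsCompact.of_isClosed_subset (hacpt.prod (hw1cpt.prod hacpt)) (hFcl 0) hsub
    obtain ⟨p, hp⟩ :=
      IsCompact.nonempty_iInter_of_sequence_nonempty_isCompact_isClosed F hFdec hFne hF0cpt hFcl
    have hp' : ∀ m, p ∈ F m := by
      intro m
      exact Set.mem_iInter.mp hp m
    have hq1 : p.2.1 = 1 := by
      by_contra hne
      have hU : ({p.2.1}ᶜ : Set G) ∈ 𝓝 (1 : G) := by
        refine IsOpen.mem_nhds isClosed_singleton.isOpen_compl ?_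
        simp only [Set.mem_compl_iff, Set.mem_singleton_iff]
        exact fun h => hne h.symm
      obtain ⟨N, hN⟩ := Filter.eventually_atTop.mp (hcontr (Ω : Set G) hΩc _ hU)
      obtain ⟨y, hy, hyp⟩ := (hp' N).2.1
      have hyΩ : y ∈ (Ω : Set G) := by
        have hBΩ : (B : Set G) ⊆ (Ω : Set G) := by
          rw [hB, Subgroup.coe_inf]; exact Set.inter_subset_left
        exact hBΩ hy
      have hcontra := hN (N+1) (Nat.le_succ N) y hyΩ
      rw [hyp] at hcontra
      simp at hcontra
    have h0 := hp' 0
    have hxa : x ∈ A := by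
      have hpx : p.1 * p.2.2 = x := by
        have h := h0.2.2.2
        rw [hq1, mul_one] at h
        exact h
      rw [← hpx]
      exact mul_mem h0.1 h0.2.2.1
    rw [hA] at hxa
    exact (Subgroup.mem_inf.mp hxa).2
  -- conclusion
  intro x hxK
  obtain ⟨n, hn⟩ := hcover x
  have h1 : (⇑α)^[n] x ∈ B := by
    rw [hB]
    exact Subgroup.mem_inf.mpr ⟨hn, aux_iterate_mem α hKst n hxK⟩
  exact aux_mem_of_iterate α hHst n (hBsubH h1)

/-- let `G` be a totally disconnected locally compact group with a contracting
automorphism `α`, and `Ω` a compact open subgroup with `α(Ω) ⊆ Ω` and `G = ⋃ α⁻ⁿ(Ω)`.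
Set `n_G = [Ω : α(Ω)]` and, for a closed `α`-invariant subgroup `H`,
`n_H = [Ω ∩ H : α(Ω ∩ H)]`. If `n_H = n_G` then `H = G`; consequently every strictly
ascending chain of closed `α`-invariant subgroups has length at most `log₂ n_G`. -/
theorem stmt7 {G : Type*} [Group G] [TopologicalSpace G] [IsTopologicalGroup G]
    [LocallyCompactSpace G] [TotallyDisconnectedSpace G]
    (α : G ≃* G) (hc : Continuous α) (hc' : Continuous α.symm)
    (hcontr : ∀ K : Set G, IsCompact K → ∀ U ∈ 𝓝 (1 : G),
      ∀ᶠ n : ℕ in atTop, ∀ x ∈ K, (⇑α)^[n] x ∈ U)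
    (Ω : Subgroup G) (hΩc : IsCompact (Ω : Set G)) (hΩo : IsOpen (Ω : Set G))
    (hinv : Ω.map α.toMonoidHom ≤ Ω)
    (hcover : ∀ x : G, ∃ n : ℕ, (⇑α)^[n] x ∈ Ω) :
    (∀ H : Subgroup G, IsClosed (H : Set G) → H.map α.toMonoidHom = H →
      ((Ω ⊓ H).map α.toMonoidHom).relIndex (Ω ⊓ H) = (Ω.map α.toMonoidHom).relIndex Ω →
      H = ⊤) ∧
    (∀ (k : ℕ) (c : Fin (k + 1) → Subgroup G),
      (∀ i, IsClosed ((c i : Set G))) → (∀ i, (c i).map α.toMonoidHom = c i) →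
      StrictMono c →
      (k : ℝ) ≤ Real.logb 2 ((Ω.map α.toMonoidHom).relIndex Ω)) := by
  have htopcl : IsClosed (((⊤ : Subgroup G) : Set G)) := by
    rw [Subgroup.coe_top]; exact isClosed_univ
  have htopst : (⊤ : Subgroup G).map α.toMonoidHom = ⊤ :=
    Subgroup.map_top_of_surjective _ α.surjective
  constructor
  · intro H hHcl hHst heq
    have hpos : 0 < ((Ω ⊓ H).map α.toMonoidHom).relIndex (Ω ⊓ H) :=
      aux_pos α hc hc' Ω hΩc hΩo hHcl hHst
    have hlt : ((Ω ⊓ (⊤ : Subgroup G)).map α.toMonoidHom).relIndex (Ω ⊓ ⊤) <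
        2 * ((Ω ⊓ H).map α.toMonoidHom).relIndex (Ω ⊓ H) := by
      rw [inf_top_eq, ← heq]
      omega
    have hmain := aux_main α hc hc' hcontr Ω hΩc hΩo hinv hcover hHcl htopcl hHst htopst
      le_top hlt
    exact top_le_iff.mp hmain
  · intro k c hcl hst hmono
    have hstep : ∀ i : ℕ, (hi : i + 1 < k + 1) →
        2 * ((Ω ⊓ c ⟨i, by omega⟩).map α.toMonoidHom).relIndex (Ω ⊓ c ⟨i, by omega⟩)
          ≤ ((Ω ⊓ c ⟨i+1, hi⟩).map α.toMonoidHom).relIndex (Ω ⊓ c ⟨i+1, hi⟩) := by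
      intro i hi
      by_contra hnle
      push_neg at hnle
      have hmlt : (⟨i, by omega⟩ : Fin (k+1)) < ⟨i+1, hi⟩ :=
        Fin.mk_lt_mk.mpr (Nat.lt_succ_self i)
      have hle : c ⟨i, by omega⟩ ≤ c ⟨i+1, hi⟩ := le_of_lt (hmono hmlt)
      have hres := aux_main α hc hc' hcontr Ω hΩc hΩo hinv hcover (hcl _) (hcl _)
        (hst _) (hst _) hle hnle
      exact absurd (lt_of_lt_of_le (hmono hmlt) hres) (lt_irrefl _)
    have hpow : ∀ i : ℕ, (hi : i < k + 1) →
        2 ^ i ≤ ((Ω ⊓ c ⟨i, hi⟩).map α.toMonoidHom).relIndex (Ω ⊓ c ⟨i, hi⟩) := by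
      intro i
      induction i with
      | zero =>
        intro hi
        have := aux_pos α hc hc' Ω hΩc hΩo (hcl ⟨0, hi⟩) (hst ⟨0, hi⟩)
        simpa [Nat.one_le_iff_ne_zero, Nat.pos_iff_ne_zero] using this
      | succ i ih =>
        intro hi
        have h1 := ih (by omega)
        have h2 := hstep i hi
        calc 2 ^ (i+1) = 2 * 2 ^ i := by ring
          _ ≤ 2 * ((Ω ⊓ c ⟨i, by omega⟩).map α.toMonoidHom).relIndex (Ω ⊓ c ⟨i, by omega⟩) :=
              Nat.mul_le_mul_left 2 h1
          _ ≤ _ := h2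
    have hfinal : 2 ^ k ≤ (Ω.map α.toMonoidHom).relIndex Ω := by
      have h1 := hpow k (Nat.lt_succ_self k)
      have h2 : ((Ω ⊓ c ⟨k, Nat.lt_succ_self k⟩).map α.toMonoidHom).relIndex
            (Ω ⊓ c ⟨k, Nat.lt_succ_self k⟩)
          ≤ ((Ω ⊓ (⊤ : Subgroup G)).map α.toMonoidHom).relIndex (Ω ⊓ ⊤) :=
        aux_mono α hc hc' Ω hΩc hΩo htopcl (hst _) htopst le_top
      rw [inf_top_eq] at h2
      omega
    have hposG : 0 < (Ω.map α.toMonoidHom).relIndex Ω := by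
      have h2k : 0 < 2 ^ k := by positivity
      omega
    rw [Real.le_logb_iff_rpow_le (by norm_num) (by exact_mod_cast hposG)]
    rw [Real.rpow_natCast]
    exact_mod_cast hfinal
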